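/- Let μ be a sublinear measure of non-compactness on E and let X be a nonempty, bounded (in supremum norm) and uniformly equicontinuous family of continuous functions from [a,b] to E. For t ∈ [a,b] write X(t) := {u(t) : u ∈ X}. Then for every t ∈ [a,b], μ({∫_a^t (t-s)^{α-1} u(s) ds : u ∈ X}) ≤ ∫_a^t (t-s)^{α-1} μ(X(s)) ds. -/

import Mathlib

open MeasureTheory Set intervalIntegral Bornology Pointwise

/-- An (axiomatic) measure of non-compactness on a real Banach space `E`:
a map `μ` on the nonempty bounded subsets of `E` with values in `[0,∞)` satisfying
the axioms (i)–(vi) of Banaś–Goebel. -/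
structure MeasureOfNoncompactness (E : Type*) [NormedAddCommGroup E] [NormedSpace ℝ E] where
  μ : Set E → ℝ
  nonneg : ∀ X : Set E, X.Nonempty → IsBounded X → 0 ≤ μ X
  ker_nonempty : ∃ X : Set E, X.Nonempty ∧ IsBounded X ∧ μ X = 0
  ker_isCompact_closure : ∀ X : Set E, X.Nonempty → IsBounded X → μ X = 0 →
    IsCompact (closure X)
  closure_eq : ∀ X : Set E, X.Nonempty → IsBounded X → μ (closure X) = μ X
  mono : ∀ X Y : Set E, X.Nonempty → IsBounded Y → X ⊆ Y → μ X ≤ μ Y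
  convexHull_eq : ∀ X : Set E, X.Nonempty → IsBounded X → μ (convexHull ℝ X) = μ X
  convex_comb_le : ∀ X Y : Set E, X.Nonempty → Y.Nonempty → IsBounded X → IsBounded Y →
    ∀ l : ℝ, 0 ≤ l → l ≤ 1 → μ (l • X + (1 - l) • Y) ≤ l * μ X + (1 - l) * μ Y
  cantor : ∀ {ι : Type} (S : ι → Set E), Nonempty ι →
    (∀ i, (S i).Nonempty) → (∀ i, IsClosed (S i)) → (∀ i, IsBounded (S i)) →
    (∀ i j, S i ⊆ S j ∨ S j ⊆ S i) →
    (∀ ε : ℝ, 0 < ε → ∃ i, μ (S i) ≤ ε) →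
    (⋂ i, S i).Nonempty ∧ IsCompact (closure (⋂ i, S i))

/-- A sublinear measure of non-compactness: additionally `μ(cX) = |c|·μ(X)` and
`μ(X+Y) ≤ μ(X) + μ(Y)`. -/
structure SublinearMeasureOfNoncompactness (E : Type*) [NormedAddCommGroup E]
    [NormedSpace ℝ E] extends MeasureOfNoncompactness E where
  smul_eq : ∀ (c : ℝ) (X : Set E), X.Nonempty → IsBounded X → μ (c • X) = |c| * μ X
  add_le : ∀ X Y : Set E, X.Nonempty → Y.Nonempty → IsBounded X → IsBounded Y →
    μ (X + Y) ≤ μ X + μ Y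

section Aux
variable {E : Type*} [NormedAddCommGroup E] [NormedSpace ℝ E]

lemma mnc_mu_singleton_zero (m : SublinearMeasureOfNoncompactness E) :
    m.μ ({0} : Set E) = 0 := by
  have h := m.smul_eq 0 ({0} : Set E) (Set.singleton_nonempty 0) Bornology.isBounded_singleton
  rw [Set.zero_smul_set (Set.singleton_nonempty 0), ← Set.singleton_zero] at h
  simpa using h

lemma mnc_mu_closedBall (m : SublinearMeasureOfNoncompactness E) {r : ℝ} (hr : 0 ≤ r) :
    m.μ (Metric.closedBall (0:E) r) = r * m.μ (Metric.closedBall (0:E) 1) := by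
  have h := m.smul_eq r (Metric.closedBall (0:E) 1) ⟨0, by simp⟩ Metric.isBounded_closedBall
  rw [smul_closedBall r (0:E) zero_le_one, smul_zero, Real.norm_of_nonneg hr, mul_one] at h
  rw [h, abs_of_nonneg hr]

lemma mnc_perturb (m : SublinearMeasureOfNoncompactness E) {A B : Set E} {δ : ℝ}
    (hA : A.Nonempty) (hB : B.Nonempty) (hBb : IsBounded B) (hδ : 0 ≤ δ)
    (h : A ⊆ B + Metric.closedBall 0 δ) :
    m.μ A ≤ m.μ B + δ * m.μ (Metric.closedBall (0:E) 1) := by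
  have hcb : IsBounded (Metric.closedBall (0:E) δ) := Metric.isBounded_closedBall
  have h1 : m.μ A ≤ m.μ (B + Metric.closedBall 0 δ) :=
    m.mono _ _ hA (hBb.add hcb) h
  have h2 := m.add_le B (Metric.closedBall 0 δ) hB ⟨0, by simp [hδ]⟩ hBb hcb
  rw [mnc_mu_closedBall m hδ] at h2
  linarith

end Aux

lemma mnc_aesm {F : Type*} [NormedAddCommGroup F] {a t : ℝ} (h : ℝ → F)
    (hco : ContinuousOn h (Set.Ioo a t)) :
    AEStronglyMeasurable h (volume.restrict (Set.Ioc a t)) := by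
  have h1 := hco.aestronglyMeasurable (μ := volume) measurableSet_Ioo
  rwa [Measure.restrict_congr_set Ioo_ae_eq_Ioc] at h1


set_option maxHeartbeats 1000000 in
/-- For a sublinear measure of non-compactness `μ` on `E` and a nonempty,
uniformly bounded and uniformly equicontinuous family `X` of continuous functions
`[a,b] → E`, one has, for every `t ∈ [a,b]`,
`μ({∫_a^t (t-s)^{α-1} u(s) ds : u ∈ X}) ≤ ∫_a^t (t-s)^{α-1} μ(X(s)) ds`. -/
theorem mnc_singular_integral_le
    {E : Type*} [NormedAddCommGroup E] [NormedSpace ℝ E] [CompleteSpace E]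
    (a b α : ℝ) (hab : a < b) (hα0 : 0 < α) (hα1 : α < 1)
    (m : SublinearMeasureOfNoncompactness E)
    (X : Set (ℝ → E)) (hne : X.Nonempty)
    (hcont : ∀ u ∈ X, ContinuousOn u (Set.Icc a b))
    (hbdd : ∃ C : ℝ, ∀ u ∈ X, ∀ t ∈ Set.Icc a b, ‖u t‖ ≤ C)
    (hequi : ∀ ε : ℝ, 0 < ε → ∃ d : ℝ, 0 < d ∧ ∀ u ∈ X, ∀ t ∈ Set.Icc a b, ∀ s ∈ Set.Icc a b,
      |t - s| ≤ d → ‖u t - u s‖ ≤ ε) :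
    ∀ t ∈ Set.Icc a b,
      m.μ ((fun u : ℝ → E => ∫ s in a..t, ((t - s) ^ (α - 1) : ℝ) • u s) '' X)
        ≤ ∫ s in a..t, ((t - s) ^ (α - 1) : ℝ) * m.μ ((fun u : ℝ → E => u s) '' X) := by
  obtain ⟨C₀, hC₀⟩ := hbdd
  set C := max C₀ 0 with hCdef
  have hC0 : 0 ≤ C := le_max_right _ _
  have hC : ∀ u ∈ X, ∀ s ∈ Set.Icc a b, ‖u s‖ ≤ C :=
    fun u hu s hs => (hC₀ u hu s hs).trans (le_max_left _ _)
  intro t ht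
  set K := m.μ (Metric.closedBall (0:E) 1) with hKdef
  have hK0 : 0 ≤ K := m.nonneg _ ⟨0, by simp⟩ Metric.isBounded_closedBall
  rcases eq_or_lt_of_le ht.1 with hteq | hat
  · -- degenerate case t = a
    subst hteq
    have himg : (fun u : ℝ → E => ∫ s in a..a, ((a - s) ^ (α - 1) : ℝ) • u s) '' X
        = {0} := by
      have : (fun u : ℝ → E => ∫ s in a..a, ((a - s) ^ (α - 1) : ℝ) • u s)
          = fun _ => (0:E) := funext fun u => intervalIntegral.integral_same
      rw [this, Set.Nonempty.image_const hne]
    rw [himg, intervalIntegral.integral_same, mnc_mu_singleton_zero m]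
  · have htb : t ≤ b := ht.2
    have hα1' : (-1:ℝ) < α - 1 := by linarith
    -- integrability of the singular weight on any interval
    have hf_int : ∀ c d : ℝ, IntervalIntegrable (fun s => (t-s)^(α-1)) volume c d := by
      intro c d
      have h := (intervalIntegrable_rpow' (a := t - c) (b := t - d) hα1').comp_sub_left t
      simpa using h
    have hf_nonneg : ∀ s : ℝ, s ≤ t → 0 ≤ (t-s)^(α-1) :=
      fun s hs => Real.rpow_nonneg (by linarith) _
    -- the pointwise sets and their μ values
    set g : ℝ → ℝ := fun s => m.μ ((fun u : ℝ → E => u s) '' X) with hgdef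
    have hXs_ne : ∀ s : ℝ, ((fun u : ℝ → E => u s) '' X).Nonempty := fun s => hne.image _
    have hXs_sub : ∀ s ∈ Set.Icc a b, ((fun u : ℝ → E => u s) '' X) ⊆ Metric.closedBall 0 C := by
      rintro s hs _ ⟨u, hu, rfl⟩
      simpa [Metric.mem_closedBall, dist_zero_right] using hC u hu s hs
    have hXs_bdd : ∀ s ∈ Set.Icc a b, IsBounded ((fun u : ℝ → E => u s) '' X) :=
      fun s hs => Metric.isBounded_closedBall.subset (hXs_sub s hs)
    have hg_nonneg : ∀ s ∈ Set.Icc a b, 0 ≤ g s := fun s hs => m.nonneg _ (hXs_ne s) (hXs_bdd s hs)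
    have hg_le : ∀ s ∈ Set.Icc a b, g s ≤ C * K := by
      intro s hs
      have h := m.mono _ _ (hXs_ne s) Metric.isBounded_closedBall (hXs_sub s hs)
      rwa [mnc_mu_closedBall m hC0] at h
    -- equicontinuity transfers to g
    have hg_close : ∀ ε : ℝ, 0 < ε → ∀ d : ℝ, 0 < d →
        (∀ u ∈ X, ∀ t₁ ∈ Set.Icc a b, ∀ s ∈ Set.Icc a b, |t₁ - s| ≤ d → ‖u t₁ - u s‖ ≤ ε) →
        ∀ s₁ ∈ Set.Icc a b, ∀ s₂ ∈ Set.Icc a b, |s₁ - s₂| ≤ d → g s₁ ≤ g s₂ + ε * K := by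
      intro ε hε d hd hdp s₁ h₁ s₂ h₂ hdist
      refine mnc_perturb m (hXs_ne s₁) (hXs_ne s₂) (hXs_bdd s₂ h₂) hε.le ?_
      rintro _ ⟨u, hu, rfl⟩
      rw [Set.mem_add]
      refine ⟨u s₂, ⟨u, hu, rfl⟩, u s₁ - u s₂, ?_, by abel⟩
      simpa [Metric.mem_closedBall, dist_zero_right] using hdp u hu s₁ h₁ s₂ h₂ hdist
    -- continuity of g on [a,b]
    have hg_cont : ContinuousOn g (Set.Icc a b) := by
      rw [Metric.continuousOn_iff]
      intro s hs ε hε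
      have hε' : 0 < ε / (2 * (K + 1)) := by positivity
      obtain ⟨d, hd0, hdp⟩ := hequi _ hε'
      refine ⟨d, hd0, fun y hy hyd => ?_⟩
      have hyd' : |y - s| ≤ d := by
        rw [Real.dist_eq] at hyd; exact hyd.le
      have h1 : g y ≤ g s + ε / (2 * (K + 1)) * K := hg_close _ hε' d hd0 hdp y hy s hs hyd'
      have h2 : g s ≤ g y + ε / (2 * (K + 1)) * K :=
        hg_close _ hε' d hd0 hdp s hs y hy (by rwa [abs_sub_comm])
      have hlt : ε / (2 * (K + 1)) * K < ε := by
        have hK1 : (0:ℝ) < K + 1 := by linarith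
        rw [div_mul_eq_mul_div, div_lt_iff₀ (by positivity)]
        nlinarith
      rw [Real.dist_eq, abs_sub_lt_iff]
      constructor <;> linarith
    have hf_contOn : ∀ c : ℝ, c < t → ContinuousOn (fun s => (t-s)^(α-1)) (Set.Iic c) := by
      intro c hc
      intro x hx
      have hx' : (0:ℝ) < t - x := by
        simp only [Set.mem_Iic] at hx; linarith
      exact ((Real.continuousAt_rpow_const _ _ (Or.inl hx'.ne')).comp
        ((continuous_const.sub continuous_id).continuousAt)).continuousWithinAt
    have hf_contOn' : ContinuousOn (fun s => (t-s)^(α-1)) (Set.Ioo a t) := by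
      intro x hx
      have hx' : (0:ℝ) < t - x := by linarith [hx.2]
      exact ((Real.continuousAt_rpow_const _ _ (Or.inl hx'.ne')).comp
        ((continuous_const.sub continuous_id).continuousAt)).continuousWithinAt
    -- integrability of the weighted μ-integrand on a..t
    have hfg_int : IntervalIntegrable (fun s => (t-s)^(α-1) * g s) volume a t := by
      rw [intervalIntegrable_iff_integrableOn_Ioc_of_le hat.le]
      have hmeas : AEStronglyMeasurable (fun s => (t-s)^(α-1) * g s)
          (volume.restrict (Set.Ioc a t)) := by
        exact mnc_aesm _ (hf_contOn'.mul (hg_cont.mono (fun x hx => ⟨hx.1.le, hx.2.le.trans htb⟩)))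
      refine Integrable.mono' (g := fun s => (C*K) * (t-s)^(α-1)) ?_ hmeas ?_
      · exact (((hf_int a t).const_mul (C*K)).1)
      · filter_upwards [ae_restrict_mem measurableSet_Ioc] with s hs
        have h1 : 0 ≤ (t-s)^(α-1) := hf_nonneg s hs.2
        have h2 : 0 ≤ g s := hg_nonneg s ⟨hs.1.le, hs.2.trans htb⟩
        have h3 : g s ≤ C * K := hg_le s ⟨hs.1.le, hs.2.trans htb⟩
        rw [Real.norm_eq_abs, abs_of_nonneg (mul_nonneg h1 h2)]
        nlinarith
    -- integrability of the weighted u-integrand on a..t, for u ∈ X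
    have hfu_int : ∀ u ∈ X, IntervalIntegrable (fun s => (t-s)^(α-1) • u s) volume a t := by
      intro u hu
      rw [intervalIntegrable_iff_integrableOn_Ioc_of_le hat.le]
      have hmeas : AEStronglyMeasurable (fun s => (t-s)^(α-1) • u s)
          (volume.restrict (Set.Ioc a t)) := by
        have hsub : Set.Ioo a t ⊆ Set.Icc a b := fun x hx => ⟨hx.1.le, hx.2.le.trans htb⟩
        exact mnc_aesm _ (hf_contOn'.smul ((hcont u hu).mono hsub))
      refine Integrable.mono' (g := fun s => C * (t-s)^(α-1)) ?_ hmeas ?_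
      · exact (((hf_int a t).const_mul C).1)
      · filter_upwards [ae_restrict_mem measurableSet_Ioc] with s hs
        have h1 : 0 ≤ (t-s)^(α-1) := hf_nonneg s hs.2
        have h2 : ‖u s‖ ≤ C := hC u hu s ⟨hs.1.le, hs.2.trans htb⟩
        rw [norm_smul, Real.norm_eq_abs, abs_of_nonneg h1]
        nlinarith [norm_nonneg (u s)]
    -- total mass of the weight
    set I := ∫ s in a..t, (t-s)^(α-1) with hIdef
    have hI0 : 0 ≤ I :=
      intervalIntegral.integral_nonneg hat.le (fun s hs => hf_nonneg s hs.2)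
    refine le_of_forall_pos_le_add ?_
    intro ε hε
    set ε₁ := ε / (3 * (K+1) * (I+1)) with hε₁def
    have hε₁ : 0 < ε₁ := by positivity
    obtain ⟨d, hd0, hdp⟩ := hequi ε₁ hε₁
    -- choice of the cutoff η
    set θ := ε * α / (3 * (C+1) * (K+1)) with hθdef
    have hθ0 : 0 < θ := by positivity
    set η := min ((t-a)/2) (θ ^ α⁻¹) with hηdef
    have hη0 : 0 < η := lt_min (by linarith) (Real.rpow_pos_of_pos hθ0 _)
    set t' := t - η with ht'def
    have hat' : a < t' := by
      have h1 : η ≤ (t-a)/2 := min_le_left _ _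
      simp only [ht'def]; linarith
    have ht't : t' < t := by simp only [ht'def]; linarith
    have hτ : ∫ s in t'..t, (t-s)^(α-1) = η^α / α := by
      rw [intervalIntegral.integral_comp_sub_left (fun x => x^(α-1)) t]
      simp only [sub_self, sub_sub_cancel]
      rw [integral_rpow (Or.inl hα1'), sub_add_cancel, Real.zero_rpow (ne_of_gt hα0)]
      simp only [ht'def, sub_sub_cancel]; ring
    have hτ0 : 0 ≤ η^α/α := by positivity
    have hτ_le : η^α/α ≤ ε / (3 * (C+1) * (K+1)) := by
      have h1 : η ≤ θ ^ α⁻¹ := min_le_right _ _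
      have h2 : η^α ≤ (θ ^ α⁻¹)^α := Real.rpow_le_rpow hη0.le h1 hα0.le
      rw [Real.rpow_inv_rpow hθ0.le (ne_of_gt hα0)] at h2
      calc η^α/α ≤ θ/α := by exact (div_le_div_iff_of_pos_right hα0).mpr h2
        _ = ε / (3 * (C+1) * (K+1)) := by
            rw [hθdef]; field_simp
    -- choice of the mesh
    obtain ⟨n, hn⟩ := exists_nat_gt ((t' - a)/d)
    have hn0 : 0 < (n:ℝ) := lt_trans (div_pos (by linarith) hd0) hn
    have hnne : (n:ℝ) ≠ 0 := ne_of_gt hn0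
    set h := (t' - a)/n with hhdef
    have hh0 : 0 < h := div_pos (by linarith) hn0
    have hhd : h ≤ d := by
      rw [hhdef, div_le_iff₀ hn0]
      have h2 := (div_lt_iff₀ hd0).mp hn
      nlinarith
    set x : ℕ → ℝ := fun i => a + i * h with hxdef
    have hx0 : x 0 = a := by simp [hxdef]
    have hxn : x n = t' := by
      simp only [hxdef, hhdef]; field_simp; ring
    have hxstep : ∀ i : ℕ, x (i+1) - x i = h := by
      intro i; simp only [hxdef, Nat.cast_succ]; ring
    have hxmono : ∀ i j : ℕ, i ≤ j → x i ≤ x j := by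
      intro i j hij
      simp only [hxdef, add_le_add_iff_left]
      exact mul_le_mul_of_nonneg_right (Nat.cast_le.mpr hij) hh0.le
    have hxmem : ∀ i : ℕ, i ≤ n → x i ∈ Set.Icc a t' := by
      intro i hi
      refine ⟨by simp only [hxdef, le_add_iff_nonneg_right]; exact mul_nonneg (Nat.cast_nonneg i) hh0.le, ?_⟩
      have h1 := hxmono i n hi; rwa [hxn] at h1
    have hIccb : ∀ i : ℕ, i ≤ n → x i ∈ Set.Icc a b := fun i hi =>
      ⟨(hxmem i hi).1, le_trans (hxmem i hi).2 (le_trans ht't.le htb)⟩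
    set c : ℕ → ℝ := fun i => ∫ s in x i..x (i+1), (t-s)^(α-1) with hcdef
    have hc0 : ∀ i : ℕ, i < n → 0 ≤ c i := by
      intro i hi
      refine intervalIntegral.integral_nonneg (hxmono i (i+1) (Nat.le_succ i)) ?_
      intro s hs
      exact hf_nonneg s (le_trans hs.2 (le_trans (hxmem (i+1) hi).2 ht't.le))
    have hsub_t : ∀ i : ℕ, i < n → Set.uIcc (x i) (x (i+1)) ⊆ Set.uIcc a t := by
      intro i hi
      rw [Set.uIcc_of_le (hxmono i (i+1) (Nat.le_succ i)), Set.uIcc_of_le hat.le]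
      exact Set.Icc_subset_Icc (hxmem i hi.le).1 ((hxmem (i+1) hi).2.trans ht't.le)
    -- the approximating sets
    set Xi : ℕ → Set E := fun i => (fun u : ℝ → E => u (x i)) '' X with hXidef
    have hS_all : ∀ k : ℕ, k ≤ n → (∑ i ∈ Finset.range k, c i • Xi i).Nonempty ∧
        IsBounded (∑ i ∈ Finset.range k, c i • Xi i) ∧
        m.μ (∑ i ∈ Finset.range k, c i • Xi i) ≤ ∑ i ∈ Finset.range k, c i * g (x i) := by
      intro k
      induction k with
      | zero =>
        intro _
        refine ⟨⟨0, by simp⟩, ?_, ?_⟩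
        · simp only [Finset.sum_range_zero, ← Set.singleton_zero]
          exact Bornology.isBounded_singleton
        · simp only [Finset.sum_range_zero, ← Set.singleton_zero, mnc_mu_singleton_zero m]
          exact le_refl 0
      | succ k ih =>
        intro hk
        obtain ⟨h1, h2, h3⟩ := ih (Nat.le_of_succ_le hk)
        have hxk := hIccb k (Nat.le_of_succ_le hk)
        have hXik_ne : (Xi k).Nonempty := hne.image _
        have hXik_b : IsBounded (Xi k) := hXs_bdd (x k) hxk
        have hck : 0 ≤ c k := hc0 k (Nat.lt_of_succ_le hk)
        have hsm_ne : (c k • Xi k).Nonempty := hXik_ne.smul_set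
        have hsm_b : IsBounded (c k • Xi k) := hXik_b.smul₀ (c k)
        rw [Finset.sum_range_succ, Finset.sum_range_succ]
        refine ⟨h1.add hsm_ne, h2.add hsm_b, ?_⟩
        refine le_trans (m.add_le _ _ h1 hsm_ne h2 hsm_b) ?_
        have heq : m.μ (c k • Xi k) = c k * g (x k) := by
          rw [m.smul_eq (c k) (Xi k) hXik_ne hXik_b, abs_of_nonneg hck]
        rw [heq]
        linarith
    have hmem : ∀ u ∈ X, ∀ k : ℕ,
        (∑ i ∈ Finset.range k, c i • u (x i)) ∈ ∑ i ∈ Finset.range k, c i • Xi i := by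
      intro u hu k
      induction k with
      | zero => simp
      | succ k ih =>
        rw [Finset.sum_range_succ, Finset.sum_range_succ]
        exact Set.add_mem_add ih (Set.smul_mem_smul_set ⟨u, hu, rfl⟩)
    -- fold the goal through g
    have hgoal : (∫ s in a..t, ((t - s) ^ (α - 1) : ℝ) * m.μ ((fun u : ℝ → E => u s) '' X))
        = ∫ s in a..t, (t-s)^(α-1) * g s := rfl
    rw [hgoal]
    -- interval inclusions
    have hsub1 : Set.uIcc a t' ⊆ Set.uIcc a t := by
      rw [Set.uIcc_of_le hat'.le, Set.uIcc_of_le hat.le]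
      exact Set.Icc_subset_Icc le_rfl ht't.le
    have hsub2 : Set.uIcc t' t ⊆ Set.uIcc a t := by
      rw [Set.uIcc_of_le ht't.le, Set.uIcc_of_le hat.le]
      exact Set.Icc_subset_Icc hat'.le le_rfl
    -- continuity of the integrand on [a,t']
    have hfu_cont : ∀ u ∈ X, ContinuousOn (fun s => (t-s)^(α-1) • u s) (Set.Icc a t') := by
      intro u hu
      refine ContinuousOn.smul ((hf_contOn t' ht't).mono ?_) ((hcont u hu).mono ?_)
      · exact fun y hy => hy.2
      · exact fun y hy => ⟨hy.1, hy.2.trans (ht't.le.trans htb)⟩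
    have hfu_int_i : ∀ u ∈ X, ∀ i : ℕ, i < n →
        IntervalIntegrable (fun s => (t-s)^(α-1) • u s) volume (x i) (x (i+1)) := by
      intro u hu i hi
      refine ((hfu_cont u hu).mono ?_).intervalIntegrable
      rw [Set.uIcc_of_le (hxmono i (i+1) (Nat.le_succ i))]
      exact Set.Icc_subset_Icc (hxmem i hi.le).1 (hxmem (i+1) hi).2
    -- total of the pieces
    set I' := ∫ s in a..t', (t-s)^(α-1) with hI'def2
    have hI'sum : (∑ i ∈ Finset.range n, c i) = I' := by
      have hh := intervalIntegral.sum_integral_adjacent_intervals (a := x) (μ := volume)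
        (f := fun s => (t-s)^(α-1)) (n := n) (fun k _ => hf_int _ _)
      rw [hx0, hxn] at hh
      exact hh
    have hI'0 : 0 ≤ I' := intervalIntegral.integral_nonneg hat'.le
      (fun s hs => hf_nonneg s (hs.2.trans ht't.le))
    have hI'I : I' ≤ I := by
      have hsplit := intervalIntegral.integral_add_adjacent_intervals
        (hf_int a t') (hf_int t' t)
      have hpos : 0 ≤ ∫ s in t'..t, (t-s)^(α-1) := by rw [hτ]; exact hτ0
      have : I' + (∫ s in t'..t, (t-s)^(α-1)) = I := hsplit
      linarith
    -- Riemann-sum approximation, uniformly over u ∈ X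
    have hRiemann : ∀ u ∈ X,
        ‖(∫ s in a..t', (t-s)^(α-1) • u s) - ∑ i ∈ Finset.range n, c i • u (x i)‖
          ≤ ε₁ * I' := by
      intro u hu
      have hsplit := intervalIntegral.sum_integral_adjacent_intervals (a := x) (μ := volume)
        (f := fun s => (t-s)^(α-1) • u s) (fun k hk => hfu_int_i u hu k hk)
      rw [hx0, hxn] at hsplit
      rw [← hsplit, ← Finset.sum_sub_distrib]
      refine le_trans (norm_sum_le _ _) ?_
      have hterm : ∀ i ∈ Finset.range n,
          ‖(∫ s in x i..x (i+1), (t-s)^(α-1) • u s) - c i • u (x i)‖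
            ≤ ε₁ * c i := by
        intro i hi
        rw [Finset.mem_range] at hi
        have hconst : c i • u (x i) = ∫ s in x i..x (i+1), (t-s)^(α-1) • u (x i) :=
          (intervalIntegral.integral_smul_const _ _).symm
        have hfc : IntervalIntegrable (fun s => (t-s)^(α-1) • u (x i)) volume (x i) (x (i+1)) := by
          refine (((hf_contOn t' ht't).mono ?_).smul continuousOn_const).intervalIntegrable
          rw [Set.uIcc_of_le (hxmono i (i+1) (Nat.le_succ i))]
          exact fun y hy => hy.2.trans (hxmem (i+1) hi).2
        rw [hconst, ← intervalIntegral.integral_sub (hfu_int_i u hu i hi) hfc]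
        have hbound : ∀ᵐ s ∂(volume.restrict (Set.uIoc (x i) (x (i+1)))),
            ‖(t-s)^(α-1) • u s - (t-s)^(α-1) • u (x i)‖ ≤ ε₁ * (t-s)^(α-1) := by
          filter_upwards [ae_restrict_mem measurableSet_uIoc] with s hs
          rw [Set.uIoc_of_le (hxmono i (i+1) (Nat.le_succ i))] at hs
          have hst : s ≤ t := hs.2.trans ((hxmem (i+1) hi).2.trans ht't.le)
          have hs1 : s ∈ Set.Icc a b :=
            ⟨(hxmem i hi.le).1.trans hs.1.le, hst.trans htb⟩
          have hs2 : |s - x i| ≤ d := by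
            rw [abs_of_nonneg (by linarith [hs.1] : (0:ℝ) ≤ s - x i)]
            have hstep := hxstep i
            linarith [hs.2, hhd]
          have hequ : ‖u s - u (x i)‖ ≤ ε₁ := hdp u hu s hs1 (x i) (hIccb i hi.le) hs2
          have hf0 : 0 ≤ (t-s)^(α-1) := hf_nonneg s hst
          rw [← smul_sub, norm_smul, Real.norm_eq_abs, abs_of_nonneg hf0]
          calc (t-s)^(α-1) * ‖u s - u (x i)‖ ≤ (t-s)^(α-1) * ε₁ :=
                mul_le_mul_of_nonneg_left hequ hf0
            _ = ε₁ * (t-s)^(α-1) := mul_comm _ _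
        have hint : IntervalIntegrable (fun s => ε₁ * (t-s)^(α-1)) volume (x i) (x (i+1)) :=
          (hf_int _ _).const_mul ε₁
        refine le_trans (intervalIntegral.norm_integral_le_abs_of_norm_le hbound hint) ?_
        rw [intervalIntegral.integral_const_mul,
          abs_of_nonneg (mul_nonneg hε₁.le (hc0 i hi))]
      refine le_trans (Finset.sum_le_sum hterm) ?_
      rw [← Finset.mul_sum, hI'sum]
    -- tail bound
    have htail : ∀ u ∈ X, ‖∫ s in t'..t, (t-s)^(α-1) • u s‖ ≤ C * (η^α/α) := by
      intro u hu
      have hbound : ∀ᵐ s ∂(volume.restrict (Set.uIoc t' t)),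
          ‖(t-s)^(α-1) • u s‖ ≤ C * (t-s)^(α-1) := by
        filter_upwards [ae_restrict_mem measurableSet_uIoc] with s hs
        rw [Set.uIoc_of_le ht't.le] at hs
        have hs1 : s ∈ Set.Icc a b := ⟨hat'.le.trans hs.1.le, hs.2.trans htb⟩
        have hf0 : 0 ≤ (t-s)^(α-1) := hf_nonneg s hs.2
        rw [norm_smul, Real.norm_eq_abs, abs_of_nonneg hf0]
        calc (t-s)^(α-1) * ‖u s‖ ≤ (t-s)^(α-1) * C :=
              mul_le_mul_of_nonneg_left (hC u hu s hs1) hf0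
          _ = C * (t-s)^(α-1) := mul_comm _ _
      have hint : IntervalIntegrable (fun s => C * (t-s)^(α-1)) volume t' t :=
        (hf_int _ _).const_mul C
      refine le_trans (intervalIntegral.norm_integral_le_abs_of_norm_le hbound hint) ?_
      rw [intervalIntegral.integral_const_mul, hτ, abs_of_nonneg (mul_nonneg hC0 hτ0)]
    -- the image is contained in a perturbation of the Riemann-sum set
    set δ := ε₁ * I' + C * (η^α/α) with hδdef
    have hδ0 : 0 ≤ δ := add_nonneg (mul_nonneg hε₁.le hI'0) (mul_nonneg hC0 hτ0)
    have hsubset : (fun u : ℝ → E => ∫ s in a..t, ((t - s) ^ (α - 1) : ℝ) • u s) '' X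
        ⊆ (∑ i ∈ Finset.range n, c i • Xi i) + Metric.closedBall 0 δ := by
      rintro _ ⟨u, hu, rfl⟩
      have hdecomp : (∫ s in a..t, (t-s)^(α-1) • u s)
          = (∫ s in a..t', (t-s)^(α-1) • u s) + ∫ s in t'..t, (t-s)^(α-1) • u s :=
        (intervalIntegral.integral_add_adjacent_intervals
          ((hfu_int u hu).mono_set hsub1) ((hfu_int u hu).mono_set hsub2)).symm
      rw [Set.mem_add]
      refine ⟨∑ i ∈ Finset.range n, c i • u (x i), hmem u hu n,
        (∫ s in a..t, (t-s)^(α-1) • u s) - ∑ i ∈ Finset.range n, c i • u (x i),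
        ?_, by abel⟩
      rw [mem_closedBall_zero_iff]
      calc ‖(∫ s in a..t, (t-s)^(α-1) • u s) - ∑ i ∈ Finset.range n, c i • u (x i)‖
          = ‖((∫ s in a..t', (t-s)^(α-1) • u s) - ∑ i ∈ Finset.range n, c i • u (x i))
              + ∫ s in t'..t, (t-s)^(α-1) • u s‖ := by rw [hdecomp]; congr 1; abel
        _ ≤ ‖(∫ s in a..t', (t-s)^(α-1) • u s) - ∑ i ∈ Finset.range n, c i • u (x i)‖
              + ‖∫ s in t'..t, (t-s)^(α-1) • u s‖ := norm_add_le _ _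
        _ ≤ ε₁ * I' + C * (η^α/α) := add_le_add (hRiemann u hu) (htail u hu)
    have hSn := hS_all n le_rfl
    have hμ1 : m.μ ((fun u : ℝ → E => ∫ s in a..t, ((t - s) ^ (α - 1) : ℝ) • u s) '' X)
        ≤ m.μ (∑ i ∈ Finset.range n, c i • Xi i) + δ * K :=
      mnc_perturb m (hne.image _) hSn.1 hSn.2.1 hδ0 hsubset
    -- compare the Riemann sum of μ-values with the integral
    have hgi : ∀ i ∈ Finset.range n, c i * g (x i) ≤
        ∫ s in x i..x (i+1), ((t-s)^(α-1) * g s + (t-s)^(α-1) * (ε₁ * K)) := by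
      intro i hi
      rw [Finset.mem_range] at hi
      have hconst : c i * g (x i) = ∫ s in x i..x (i+1), (t-s)^(α-1) * g (x i) :=
        (intervalIntegral.integral_mul_const _ _).symm
      rw [hconst]
      refine intervalIntegral.integral_mono_on (hxmono i (i+1) (Nat.le_succ i))
        ((hf_int _ _).mul_const _)
        ((hfg_int.mono_set (hsub_t i hi)).add ((hf_int _ _).mul_const _)) ?_
      intro s hs
      have hst : s ≤ t := hs.2.trans ((hxmem (i+1) hi).2.trans ht't.le)
      have hs1 : s ∈ Set.Icc a b := ⟨(hxmem i hi.le).1.trans hs.1, hst.trans htb⟩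
      have hs2 : |x i - s| ≤ d := by
        rw [abs_sub_comm, abs_of_nonneg (by linarith [hs.1] : (0:ℝ) ≤ s - x i)]
        have hstep := hxstep i
        linarith [hs.2, hhd]
      have hgc : g (x i) ≤ g s + ε₁ * K :=
        hg_close ε₁ hε₁ d hd0 hdp (x i) (hIccb i hi.le) s hs1 hs2
      have hf0 : 0 ≤ (t-s)^(α-1) := hf_nonneg s hst
      nlinarith
    have hsum_le : (∑ i ∈ Finset.range n, c i * g (x i))
        ≤ (∫ s in a..t', (t-s)^(α-1) * g s) + ε₁ * K * I' := by
      refine le_trans (Finset.sum_le_sum hgi) ?_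
      have hADJ := intervalIntegral.sum_integral_adjacent_intervals (a := x) (μ := volume)
        (f := fun s => (t-s)^(α-1) * g s + (t-s)^(α-1) * (ε₁ * K))
        (fun k hk => ((hfg_int.mono_set (hsub_t k hk)).add ((hf_int _ _).mul_const _)))
      rw [hx0, hxn] at hADJ
      rw [hADJ, intervalIntegral.integral_add (hfg_int.mono_set hsub1)
        ((hf_int _ _).mul_const _), intervalIntegral.integral_mul_const]
      have hfold : (∫ s in a..t', (t-s)^(α-1)) = I' := rfl
      rw [hfold]
      nlinarith [hε₁.le, hK0, hI'0]
    -- monotonicity in the upper limit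
    have hfg_mono : (∫ s in a..t', (t-s)^(α-1) * g s) ≤ ∫ s in a..t, (t-s)^(α-1) * g s := by
      have hsplit := intervalIntegral.integral_add_adjacent_intervals
        (hfg_int.mono_set hsub1) (hfg_int.mono_set hsub2)
      have hpos : 0 ≤ ∫ s in t'..t, (t-s)^(α-1) * g s := by
        refine intervalIntegral.integral_nonneg ht't.le ?_
        intro s hs
        exact mul_nonneg (hf_nonneg s hs.2) (hg_nonneg s ⟨hat'.le.trans hs.1, hs.2.trans htb⟩)
      linarith
    -- final numeric bookkeeping
    clear_value ε₁ I I' K C δ η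
    have e1 : ε₁ * ((K+1) * (I+1)) = ε/3 := by
      rw [hε₁def]; field_simp
    have b1 : ε₁ * K * I' ≤ ε/3 := by
      have h1 : K * I ≤ (K+1)*(I+1) := by
        have e : (K+1)*(I+1) = K*I + (K + I + 1) := by ring
        linarith only [e, hK0, hI0]
      calc ε₁ * K * I' ≤ ε₁ * K * I :=
            mul_le_mul_of_nonneg_left hI'I (mul_nonneg hε₁.le hK0)
        _ = ε₁ * (K * I) := by ring
        _ ≤ ε₁ * ((K+1)*(I+1)) := mul_le_mul_of_nonneg_left h1 hε₁.le
        _ = ε/3 := e1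
    have b3 : C * (η^α/α) * K ≤ ε/3 := by
      have hC1 : (C:ℝ)+1 ≠ 0 := by linarith only [hC0]
      have hK1 : (K:ℝ)+1 ≠ 0 := by linarith only [hK0]
      have hCK1 : (0:ℝ) ≤ (C+1)*(K+1) :=
        mul_nonneg (by linarith only [hC0]) (by linarith only [hK0])
      have h2 : C*K ≤ (C+1)*(K+1) := by
        have e : (C+1)*(K+1) = C*K + (C + K + 1) := by ring
        linarith only [e, hC0, hK0]
      calc C * (η^α/α) * K = (C*K) * (η^α/α) := by ring
        _ ≤ ((C+1)*(K+1)) * (η^α/α) := mul_le_mul_of_nonneg_right h2 hτ0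
        _ ≤ ((C+1)*(K+1)) * (ε / (3*(C+1)*(K+1))) := mul_le_mul_of_nonneg_left hτ_le hCK1
        _ = ε/3 := by field_simp
    have hδK : δ * K = ε₁ * I' * K + C * (η^α/α) * K := by rw [hδdef]; ring
    have b2 : ε₁ * I' * K ≤ ε/3 := by
      have e : ε₁ * I' * K = ε₁ * K * I' := by ring
      rw [e]; exact b1
    calc m.μ ((fun u : ℝ → E => ∫ s in a..t, ((t - s) ^ (α - 1) : ℝ) • u s) '' X)
        ≤ m.μ (∑ i ∈ Finset.range n, c i • Xi i) + δ * K := hμ1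
      _ ≤ (∑ i ∈ Finset.range n, c i * g (x i)) + δ * K := by linarith only [hSn.2.2]
      _ ≤ (∫ s in a..t', (t-s)^(α-1) * g s) + ε₁ * K * I' + δ * K := by linarith only [hsum_le]
      _ ≤ (∫ s in a..t, (t-s)^(α-1) * g s) + ε := by linarith only [hfg_mono, b1, b2, b3, hδK]
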